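/- Let D be a Dedekind domain. The ring D(X), the localization of D[X] at polynomials with unit content ideal, is a principal ideal domain. -/

import Mathlib

open Polynomial hiding contentIdeal coeff_mem_contentIdeal contentIdeal_zero

/-- The content ideal of a polynomial: the ideal generated by its coefficients. -/
noncomputable def contentIdeal {D : Type*} [CommRing D] (f : Polynomial D) : Ideal D :=
  Ideal.span (Set.range f.coeff)

section Basic
variable {D : Type*} [CommRing D]

lemma coeff_mem_contentIdeal (f : D[X]) (n : ℕ) : f.coeff n ∈ contentIdeal f :=
  Ideal.subset_span ⟨n, rfl⟩

lemma contentIdeal_le_iff {f : D[X]} {I : Ideal D} :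
    contentIdeal f ≤ I ↔ ∀ n, f.coeff n ∈ I := by
  rw [contentIdeal, Ideal.span_le, Set.range_subset_iff]; rfl

lemma mem_contentIdeal_map_C (f : D[X]) : f ∈ (contentIdeal f).map (C : D →+* D[X]) :=
  Ideal.mem_map_C_iff.mpr fun n => coeff_mem_contentIdeal f n

lemma contentIdeal_zero : contentIdeal (0 : D[X]) = ⊥ := by
  rw [eq_bot_iff, contentIdeal_le_iff]
  simp

lemma eq_zero_of_contentIdeal_le_bot {f : D[X]} (h : contentIdeal f ≤ ⊥) : f = 0 := by
  ext n
  simpa using h (coeff_mem_contentIdeal f n)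

/-- the "gap" polynomial attached to a family of coefficients -/
noncomputable def gapPoly {D : Type*} [CommRing D] {m : ℕ} (y : Fin m → D) (d : ℕ) : D[X] :=
  ∑ k : Fin m, C (y k) * X ^ ((k : ℕ) * (d + 1))

lemma gapPoly_coeff_mem {m : ℕ} (y : Fin m → D) (d : ℕ) {J : Ideal D} (hy : ∀ k, y k ∈ J)
    (n : ℕ) : (gapPoly y d).coeff n ∈ J := by
  have : gapPoly y d ∈ J.map (C : D →+* D[X]) := by
    refine Submodule.sum_mem _ fun k _ => ?_
    exact Ideal.mul_mem_right _ _ (Ideal.mem_map_of_mem _ (hy k))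
  exact Ideal.mem_map_C_iff.mp this n

lemma gapPoly_mul_coeff {m : ℕ} (y : Fin m → D) (f : D[X]) (j : Fin m) {i : ℕ}
    (hi : i ≤ f.natDegree) :
    (gapPoly y f.natDegree * f).coeff ((j : ℕ) * (f.natDegree + 1) + i) =
      y j * f.coeff i := by
  set d := f.natDegree with hd
  rw [gapPoly, Finset.sum_mul, finset_sum_coeff]
  rw [Finset.sum_eq_single j]
  · have h1 : C (y j) * X ^ ((j : ℕ) * (d + 1)) * f = C (y j) * f * X ^ ((j : ℕ) * (d + 1)) := by
      ring
    rw [h1, coeff_mul_X_pow', if_pos (Nat.le_add_right _ _), Nat.add_sub_cancel_left, coeff_C_mul]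
  · intro k _ hk
    have h1 : C (y k) * X ^ ((k : ℕ) * (d + 1)) * f = C (y k) * f * X ^ ((k : ℕ) * (d + 1)) := by
      ring
    rw [h1, coeff_mul_X_pow']
    rcases lt_or_gt_of_ne (fun h : (k : ℕ) = (j : ℕ) => hk (Fin.ext h)) with hlt | hgt
    · rw [if_pos]
      · rw [coeff_C_mul]
        have hdeg : d < (j : ℕ) * (d + 1) + i - (k : ℕ) * (d + 1) := by
          have : (k : ℕ) * (d + 1) + (d + 1) ≤ (j : ℕ) * (d + 1) := by
            have := Nat.succ_le_of_lt hlt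
            calc (k : ℕ) * (d + 1) + (d + 1) = ((k : ℕ) + 1) * (d + 1) := by ring
            _ ≤ (j : ℕ) * (d + 1) := Nat.mul_le_mul_right _ this
          omega
        rw [coeff_eq_zero_of_natDegree_lt hdeg, mul_zero]
      · have : (k : ℕ) * (d + 1) ≤ (j : ℕ) * (d + 1) :=
          Nat.mul_le_mul_right _ (le_of_lt hlt)
        omega
    · rw [if_neg]
      have : ((j : ℕ) + 1) * (d + 1) ≤ (k : ℕ) * (d + 1) :=
        Nat.mul_le_mul_right _ (Nat.succ_le_of_lt hgt)
      have h2 : ((j : ℕ) + 1) * (d + 1) = (j : ℕ) * (d + 1) + (d + 1) := by ring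
      omega
  · intro h
    exact absurd (Finset.mem_univ j) h

lemma mul_le_contentIdeal_gapPoly {m : ℕ} (y : Fin m → D) (f : D[X]) :
    contentIdeal f * Ideal.span (Set.range y) ≤ contentIdeal (gapPoly y f.natDegree * f) := by
  rw [contentIdeal, Ideal.span_mul_span']
  rw [Ideal.span_le]
  rintro x ⟨a, ⟨i, rfl⟩, z, ⟨j, rfl⟩, rfl⟩
  show f.coeff i * y j ∈ _
  rcases le_or_gt i f.natDegree with hi | hi
  · have := gapPoly_mul_coeff y f j hi
    rw [mul_comm (f.coeff i)]
    rw [← this]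
    exact coeff_mem_contentIdeal _ _
  · rw [coeff_eq_zero_of_natDegree_lt hi, zero_mul]
    exact Submodule.zero_mem _

end Basic

section Key
variable {D : Type*} [CommRing D] [IsDomain D] [IsDedekindDomain D]

/-- Key lemma: for any `a` in the content ideal of a nonzero `f`, there are `s` of unit
content and `v` with `C a * s = v * f`. -/
lemma exists_unit_content_denominator {f : D[X]} (hf : f ≠ 0) {a : D}
    (ha : a ∈ contentIdeal f) :
    ∃ s v : D[X], contentIdeal s = ⊤ ∧ C a * s = v * f := by
  -- the content ideal is nonzero
  have hI : contentIdeal f ≠ ⊥ := fun h => hf (eq_zero_of_contentIdeal_le_bot h.le)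
  obtain ⟨b, hbI, hb⟩ := Submodule.exists_mem_ne_zero_of_ne_bot hI
  -- invertibility: I * J = (b)
  obtain ⟨J, hJ⟩ : contentIdeal f ∣ Ideal.span {b} :=
    Ideal.dvd_iff_le.mpr ((Ideal.span_singleton_le_iff_mem _).mpr hbI)
  -- generators of J
  obtain ⟨m, y, hy⟩ := Submodule.fg_iff_exists_fin_generating_family.mp (IsNoetherian.noetherian J)
  have hyJ : ∀ k, y k ∈ J := fun k => hy ▸ Submodule.subset_span ⟨k, rfl⟩
  set u := gapPoly y f.natDegree with hu
  have humem : ∀ n, u.coeff n ∈ J := gapPoly_coeff_mem y f.natDegree hyJ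
  -- all coefficients of u * f are in I*J = (b)
  have hcoeff_mem : ∀ (g : D[X]), (∀ n, g.coeff n ∈ J) → ∀ n,
      (g * f).coeff n ∈ Ideal.span {b} := by
    intro g hg n
    rw [hJ, mul_comm (contentIdeal f) J, coeff_mul]
    refine Submodule.sum_mem _ fun p _ => ?_
    exact Ideal.mul_mem_mul (hg p.1) (coeff_mem_contentIdeal f p.2)
  -- so u * f = C b * s' for some s'
  have huf : u * f ∈ (Ideal.span {b}).map (C : D →+* D[X]) :=
    Ideal.mem_map_C_iff.mpr (hcoeff_mem u humem)
  rw [Ideal.map_span, Set.image_singleton, Ideal.mem_span_singleton] at huf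
  obtain ⟨s, hs⟩ := huf
  -- b is in the content ideal of u * f
  have hbc : b ∈ contentIdeal (u * f) := by
    refine mul_le_contentIdeal_gapPoly y f ?_
    have hy' : Ideal.span (Set.range y) = J := hy
    rw [hy', ← hJ]
    exact Ideal.subset_span rfl
  -- hence 1 is in the content ideal of s
  have hCb : (C b : D[X]) ≠ 0 := fun h => hb (by simpa using congrArg (fun p => coeff p 0) h)
  have hsc : contentIdeal s = ⊤ := by
    rw [hs] at hbc
    rw [contentIdeal] at hbc
    have : ∀ n, (C b * s).coeff n = b * s.coeff n := fun n => coeff_C_mul _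
    rw [Ideal.eq_top_iff_one]
    obtain ⟨c, hc⟩ := Finsupp.mem_span_range_iff_exists_finsupp.mp hbc
    have key : (c.sum fun i r => r • (C b * s).coeff i) =
        b * c.sum fun i r => r * s.coeff i := by
      rw [Finsupp.mul_sum]
      refine Finsupp.sum_congr fun i _ => ?_
      rw [this i, smul_eq_mul]; ring
    have hc' : b * (c.sum fun i r => r * s.coeff i) = b * 1 := by
      rw [mul_one, ← key, hc]
    have h1 : (c.sum fun i r => r * s.coeff i) = 1 := mul_left_cancel₀ hb hc'
    rw [← h1]
    exact Submodule.sum_mem _ fun i _ =>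
      Ideal.mul_mem_left _ _ (coeff_mem_contentIdeal s i)
  -- C a * u = C b * v for some v
  have hau : C a * u ∈ (Ideal.span {b}).map (C : D →+* D[X]) := by
    refine Ideal.mem_map_C_iff.mpr fun n => ?_
    rw [coeff_C_mul, hJ]
    exact Ideal.mul_mem_mul ha (humem n)
  rw [Ideal.map_span, Set.image_singleton, Ideal.mem_span_singleton] at hau
  obtain ⟨v, hv⟩ := hau
  refine ⟨s, v, hsc, mul_left_cancel₀ hCb ?_⟩
  calc C b * (C a * s) = C a * (C b * s) := by ring
  _ = C a * (u * f) := by rw [← hs]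
  _ = (C a * u) * f := by ring
  _ = C b * (v * f) := by rw [hv]; ring

end Key

section Loc
variable {D : Type*} [CommRing D] [IsDomain D] [IsDedekindDomain D]

lemma closure_le_nonZeroDivisors :
    Submonoid.closure {g : D[X] | contentIdeal g = ⊤} ≤ nonZeroDivisors D[X] := by
  rw [Submonoid.closure_le]
  intro g hg
  have hg' : contentIdeal g = ⊤ := hg
  refine mem_nonZeroDivisors_of_ne_zero fun h => ?_
  rw [h, contentIdeal_zero] at hg'
  exact absurd hg' bot_ne_top

lemma contentIdeal_combine (f g : D[X]) :
    contentIdeal (f + g * X ^ (f.natDegree + 1)) = contentIdeal f ⊔ contentIdeal g := by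
  set d := f.natDegree with hd
  set F := f + g * X ^ (d + 1) with hF
  refine le_antisymm ?_ (sup_le ?_ ?_)
  · rw [contentIdeal_le_iff]
    intro n
    rw [hF, coeff_add, coeff_mul_X_pow']
    refine add_mem (Ideal.mem_sup_left (coeff_mem_contentIdeal f n)) ?_
    split
    · exact Ideal.mem_sup_right (coeff_mem_contentIdeal g _)
    · exact zero_mem _
  · rw [contentIdeal_le_iff]
    intro n
    rcases le_or_gt n d with hn | hn
    · have hc : F.coeff n = f.coeff n := by
        rw [hF, coeff_add, coeff_mul_X_pow', if_neg (by omega), add_zero]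
      rw [← hc]; exact coeff_mem_contentIdeal F n
    · rw [coeff_eq_zero_of_natDegree_lt hn]; exact zero_mem _
  · rw [contentIdeal_le_iff]
    intro n
    have hc : F.coeff (n + (d + 1)) = g.coeff n := by
      rw [hF, coeff_add, coeff_mul_X_pow', if_pos (by omega), Nat.add_sub_cancel,
        coeff_eq_zero_of_natDegree_lt (by omega), zero_add]
    rw [← hc]; exact coeff_mem_contentIdeal F _

lemma algebraMap_C_mem_span {f : D[X]} (hf : f ≠ 0) {a : D} (ha : a ∈ contentIdeal f) :
    algebraMap D[X] (Localization (Submonoid.closure {g : D[X] | contentIdeal g = ⊤})) (C a) ∈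
      Ideal.span {algebraMap D[X]
        (Localization (Submonoid.closure {g : D[X] | contentIdeal g = ⊤})) f} := by
  set L := Localization (Submonoid.closure {g : D[X] | contentIdeal g = ⊤})
  set φ := algebraMap D[X] L
  obtain ⟨s, v, hsc, heq⟩ := exists_unit_content_denominator hf ha
  have hsS : s ∈ Submonoid.closure {g : D[X] | contentIdeal g = ⊤} :=
    Submonoid.subset_closure hsc
  have hu : IsUnit (φ s) := IsLocalization.map_units L
    (⟨s, hsS⟩ : Submonoid.closure {g : D[X] | contentIdeal g = ⊤})
  refine Ideal.mem_span_singleton'.mpr ⟨φ v * ↑hu.unit⁻¹, ?_⟩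
  calc φ v * ↑hu.unit⁻¹ * φ f = φ v * φ f * ↑hu.unit⁻¹ := by ring
  _ = φ (C a) * φ s * ↑hu.unit⁻¹ := by rw [← map_mul, ← map_mul, heq]
  _ = φ (C a) * (↑hu.unit * ↑hu.unit⁻¹) := by rw [IsUnit.unit_spec]; ring
  _ = φ (C a) := by rw [Units.mul_inv, mul_one]

lemma map_contentIdeal_eq {f : D[X]} (hf : f ≠ 0) :
    Ideal.map (algebraMap D[X]
        (Localization (Submonoid.closure {g : D[X] | contentIdeal g = ⊤})))
      (Ideal.map (C : D →+* D[X]) (contentIdeal f)) =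
    Ideal.span {algebraMap D[X]
        (Localization (Submonoid.closure {g : D[X] | contentIdeal g = ⊤})) f} := by
  refine le_antisymm ?_ ?_
  · rw [Ideal.map_le_iff_le_comap, Ideal.map_le_iff_le_comap]
    intro a ha
    exact algebraMap_C_mem_span hf ha
  · rw [Ideal.span_le, Set.singleton_subset_iff]
    exact Ideal.mem_map_of_mem _ (mem_contentIdeal_map_C f)

lemma exists_pair_gen (f g : D[X]) :
    ∃ F : D[X],
      Ideal.span {algebraMap D[X]
          (Localization (Submonoid.closure {g : D[X] | contentIdeal g = ⊤})) f} ⊔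
        Ideal.span {algebraMap D[X]
          (Localization (Submonoid.closure {g : D[X] | contentIdeal g = ⊤})) g} =
      Ideal.span {algebraMap D[X]
          (Localization (Submonoid.closure {g : D[X] | contentIdeal g = ⊤})) F} := by
  set L := Localization (Submonoid.closure {g : D[X] | contentIdeal g = ⊤})
  set φ := algebraMap D[X] L
  rcases eq_or_ne f 0 with rfl | hf
  · exact ⟨g, by rw [map_zero, Ideal.span_singleton_eq_bot.mpr rfl, bot_sup_eq]⟩
  rcases eq_or_ne g 0 with rfl | hg
  · exact ⟨f, by rw [map_zero, Ideal.span_singleton_eq_bot.mpr rfl, sup_bot_eq]⟩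
  refine ⟨f + g * X ^ (f.natDegree + 1), ?_⟩
  have hF : f + g * X ^ (f.natDegree + 1) ≠ 0 := by
    intro h
    refine hf (eq_zero_of_contentIdeal_le_bot ?_)
    have := contentIdeal_combine f g
    rw [h, contentIdeal_zero] at this
    exact le_sup_left.trans this.symm.le
  rw [← map_contentIdeal_eq hf, ← map_contentIdeal_eq hg, ← map_contentIdeal_eq hF,
    ← Ideal.map_sup, ← Ideal.map_sup, contentIdeal_combine f g]

lemma exists_finset_gen (s : Finset D[X]) :
    ∃ F : D[X],
      Ideal.map (algebraMap D[X]
          (Localization (Submonoid.closure {g : D[X] | contentIdeal g = ⊤})))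
        (Ideal.span (s : Set D[X])) =
      Ideal.span {algebraMap D[X]
          (Localization (Submonoid.closure {g : D[X] | contentIdeal g = ⊤})) F} := by
  classical
  induction s using Finset.induction with
  | empty =>
    refine ⟨0, ?_⟩
    rw [Finset.coe_empty, Ideal.span_empty, Ideal.map_bot, map_zero,
      Ideal.span_singleton_eq_bot.mpr rfl]
  | @insert a s ha ih =>
    obtain ⟨G, hG⟩ := ih
    obtain ⟨F, hF⟩ := exists_pair_gen (D := D) a G
    refine ⟨F, ?_⟩
    rw [Finset.coe_insert, Ideal.span_insert, Ideal.map_sup, hG,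
      Ideal.map_span, Set.image_singleton, hF]

end Loc

/-- Claborn: for a Dedekind domain `D`, the ring `D(X)`, the localization of `D[X]` at the
polynomials with unit content ideal, is a principal ideal domain. -/
theorem DX_isPrincipalIdealDomain {D : Type*} [CommRing D] [IsDomain D]
    [IsDedekindDomain D] :
    IsPrincipalIdealRing
        (Localization (Submonoid.closure {g : Polynomial D | contentIdeal g = ⊤})) ∧
      IsDomain (Localization (Submonoid.closure {g : Polynomial D | contentIdeal g = ⊤})) := by
  constructor
  · constructor
    intro Q
    have hQ := IsLocalization.map_comap
      (Submonoid.closure {g : Polynomial D | contentIdeal g = ⊤})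
      (Localization (Submonoid.closure {g : Polynomial D | contentIdeal g = ⊤})) Q
    have hfg : (Ideal.comap (algebraMap (Polynomial D)
        (Localization (Submonoid.closure {g : Polynomial D | contentIdeal g = ⊤}))) Q).FG :=
      IsNoetherian.noetherian _
    obtain ⟨T, hT⟩ := hfg
    obtain ⟨F, hF⟩ := exists_finset_gen (D := D) T
    exact ⟨⟨algebraMap (Polynomial D)
      (Localization (Submonoid.closure {g : Polynomial D | contentIdeal g = ⊤})) F,
      by rw [← hQ, Ideal.under, ← hT, hF]⟩⟩
  · exact IsLocalization.isDomain_localization closure_le_nonZeroDivisors
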